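/- Let λ ∈ L¹(Ω) satisfy 0 < Λ₁ ≤ ‖λ‖_{L¹} ≤ Λ₂, and define the operator E on C(Ω) by E[W](x) := (μ/(σF)) ∫_Ω (W(y)|λ(y)| + φ(y)) G[λ](y)^{σ−1} T(x,y)^{1−σ} dy. Then E maps C_{0+}(Ω) into itself and for all W₁, W₂ ∈ C_{0+}(Ω), ‖E[W₁] − E[W₂]‖_∞ ≤ (μ/σ)·(T_max/T_min)^{σ−1}·(Λ₂/Λ₁)·‖W₁ − W₂‖_∞; in particular, if (μ/σ)(T_max/T_min)^{σ−1}(Λ₂/Λ₁) < 1, then E is a contraction on C_{0+}(Ω) with respect to the sup norm. -/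

import Mathlib

open MeasureTheory Real Set

/-- The price index operator `G[λ](x) = [(1/F) ∫_Ω |λ(y)| T(x,y)^{1-σ} dy]^{1/(1-σ)}`. -/
noncomputable def priceIndex {n : ℕ} (Ω : Set (Fin n → ℝ)) (F σ : ℝ)
    (T : (Fin n → ℝ) → (Fin n → ℝ) → ℝ) (lam : (Fin n → ℝ) → ℝ)
    (x : Fin n → ℝ) : ℝ :=
  ((1 / F) * ∫ y in Ω, |lam y| * T x y ^ (1 - σ)) ^ (1 / (1 - σ))

/-- The operator `E` given by the right-hand side of the wage fixed-point equation. -/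
noncomputable def wageOp {n : ℕ} (Ω : Set (Fin n → ℝ)) (F σ μ : ℝ)
    (T : (Fin n → ℝ) → (Fin n → ℝ) → ℝ) (φ lam W : (Fin n → ℝ) → ℝ) :
    (Fin n → ℝ) → ℝ :=
  fun x => (μ / (σ * F)) *
    ∫ y in Ω, (W y * |lam y| + φ y) * priceIndex Ω F σ T lam y ^ (σ - 1) * T x y ^ (1 - σ)

/-- Sup norm of `f` over the region `Ω`. -/
noncomputable def supNormOn {n : ℕ} (Ω : Set (Fin n → ℝ)) (f : (Fin n → ℝ) → ℝ) : ℝ :=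
  sSup ((fun x => |f x|) '' Ω)

theorem wage_operator_contraction {n : ℕ} (Ω : Set (Fin n → ℝ))
    (hΩc : IsCompact Ω) (hΩpos : 0 < volume Ω)
    (T : (Fin n → ℝ) → (Fin n → ℝ) → ℝ)
    (hTcont : ContinuousOn (fun p : (Fin n → ℝ) × (Fin n → ℝ) => T p.1 p.2) (Ω ×ˢ Ω))
    (Tmin Tmax : ℝ) (hTmin : 1 ≤ Tmin)
    (hT : ∀ x ∈ Ω, ∀ y ∈ Ω, T x y ∈ Icc Tmin Tmax)
    (σ μ F Φ : ℝ) (hσ : 1 < σ) (hμ : μ ∈ Ioo (0 : ℝ) 1) (hF : 0 < F) (hΦ : 0 < Φ)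
    (φ : (Fin n → ℝ) → ℝ) (hφint : IntegrableOn φ Ω)
    (hφ0 : ∀ᵐ x ∂(volume.restrict Ω), 0 ≤ φ x) (hφΦ : (∫ x in Ω, φ x) = Φ)
    (lam : (Fin n → ℝ) → ℝ) (hlam : IntegrableOn lam Ω)
    (Λ₁ Λ₂ : ℝ) (hΛ₁ : 0 < Λ₁)
    (h₁ : Λ₁ ≤ ∫ x in Ω, |lam x|) (h₂ : (∫ x in Ω, |lam x|) ≤ Λ₂) :
    (∀ W : (Fin n → ℝ) → ℝ, ContinuousOn W Ω → (∀ x ∈ Ω, 0 ≤ W x) →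
      ContinuousOn (wageOp Ω F σ μ T φ lam W) Ω ∧
        ∀ x ∈ Ω, 0 ≤ wageOp Ω F σ μ T φ lam W x) ∧
    (∀ W₁ W₂ : (Fin n → ℝ) → ℝ,
      ContinuousOn W₁ Ω → (∀ x ∈ Ω, 0 ≤ W₁ x) →
      ContinuousOn W₂ Ω → (∀ x ∈ Ω, 0 ≤ W₂ x) →
      supNormOn Ω (fun x => wageOp Ω F σ μ T φ lam W₁ x - wageOp Ω F σ μ T φ lam W₂ x) ≤
        μ / σ * (Tmax / Tmin) ^ (σ - 1) * (Λ₂ / Λ₁) *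
          supNormOn Ω (fun x => W₁ x - W₂ x)) ∧
    (μ / σ * (Tmax / Tmin) ^ (σ - 1) * (Λ₂ / Λ₁) < 1 →
      ∃ c : ℝ, 0 ≤ c ∧ c < 1 ∧
        ∀ W₁ W₂ : (Fin n → ℝ) → ℝ,
          ContinuousOn W₁ Ω → (∀ x ∈ Ω, 0 ≤ W₁ x) →
          ContinuousOn W₂ Ω → (∀ x ∈ Ω, 0 ≤ W₂ x) →
          supNormOn Ω (fun x => wageOp Ω F σ μ T φ lam W₁ x - wageOp Ω F σ μ T φ lam W₂ x) ≤
            c * supNormOn Ω (fun x => W₁ x - W₂ x)) := by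
  
  have hΩm : MeasurableSet Ω := hΩc.measurableSet
  have hΩne : Ω.Nonempty := by
    rcases Set.eq_empty_or_nonempty Ω with h | h
    · simp [h] at hΩpos
    · exact h
  obtain ⟨x₀, hx₀⟩ := hΩne
  have hTminpos : (0:ℝ) < Tmin := lt_of_lt_of_le one_pos hTmin
  have hTmm : Tmin ≤ Tmax := le_trans (hT x₀ hx₀ x₀ hx₀).1 (hT x₀ hx₀ x₀ hx₀).2
  have hTmaxpos : (0:ℝ) < Tmax := lt_of_lt_of_le hTminpos hTmm
  have hexp : 1 - σ ≤ 0 := by linarith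
  have hμ0 : 0 < μ := hμ.1
  have hσ0 : (0:ℝ) < σ := by linarith
  have hΛ₂ : 0 < Λ₂ := lt_of_lt_of_le hΛ₁ (h₁.trans h₂)
  -- pointwise rpow facts
  have hTrpow : ∀ x ∈ Ω, ∀ y ∈ Ω,
      T x y ^ (1-σ) ≤ 1 ∧ Tmax ^ (1-σ) ≤ T x y ^ (1-σ) ∧ 0 ≤ T x y ^ (1-σ) := by
    intro x hx y hy
    have h1 := (hT x hx y hy).1; have h2 := (hT x hx y hy).2
    exact ⟨Real.rpow_le_one_of_one_le_of_nonpos (le_trans hTmin h1) hexp,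
      Real.rpow_le_rpow_of_nonpos (lt_of_lt_of_le hTminpos h1) h2 hexp,
      Real.rpow_nonneg (by linarith) _⟩
  -- continuity of y ↦ T x y ^ (1-σ) on Ω
  have hcontT2 : ∀ x ∈ Ω, ContinuousOn (fun y => T x y ^ (1-σ)) Ω := by
    intro x hx
    have h1 : ContinuousOn (fun y => T x y) Ω :=
      hTcont.comp ((continuous_const.prodMk continuous_id).continuousOn)
        (fun y hy => ⟨hx, hy⟩)
    exact h1.rpow_const (fun y hy =>
      Or.inl (lt_of_lt_of_le hTminpos (hT x hx y hy).1).ne')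
  -- integrability lemma
  have hint : ∀ (g : (Fin n → ℝ) → ℝ), IntegrableOn g Ω → ∀ x ∈ Ω,
      IntegrableOn (fun y => g y * T x y ^ (1-σ)) Ω := by
    intro g hg x hx
    refine Integrable.mono' hg.abs
      (hg.aestronglyMeasurable.mul ((hcontT2 x hx).aestronglyMeasurable hΩm)) ?_
    filter_upwards [ae_restrict_mem hΩm] with y hy
    rw [Real.norm_eq_abs, abs_mul, abs_of_nonneg (hTrpow x hx y hy).2.2]
    nlinarith [abs_nonneg (g y), (hTrpow x hx y hy).1, (hTrpow x hx y hy).2.2]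
  -- Lemma A: continuity of parametric integral
  have hcontInt : ∀ (g : (Fin n → ℝ) → ℝ), IntegrableOn g Ω →
      ContinuousOn (fun x => ∫ y in Ω, g y * T x y ^ (1-σ)) Ω := by
    intro g hg x hx
    refine continuousWithinAt_of_dominated ?_ ?_ hg.abs ?_
    · filter_upwards [self_mem_nhdsWithin] with z hz
      exact hg.aestronglyMeasurable.mul ((hcontT2 z hz).aestronglyMeasurable hΩm)
    · filter_upwards [self_mem_nhdsWithin] with z hz
      filter_upwards [ae_restrict_mem hΩm] with y hy
      rw [Real.norm_eq_abs, abs_mul, abs_of_nonneg (hTrpow z hz y hy).2.2]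
      nlinarith [abs_nonneg (g y), (hTrpow z hz y hy).1, (hTrpow z hz y hy).2.2]
    · filter_upwards [ae_restrict_mem hΩm] with y hy
      have hf : ContinuousWithinAt (fun z : Fin n → ℝ => (z, y)) Ω x :=
        (continuous_id.prodMk continuous_const).continuousWithinAt
      have h1 : ContinuousWithinAt (fun z => T z y) Ω x :=
        ContinuousWithinAt.comp (f := fun z : Fin n → ℝ => (z, y))
          (g := fun p : (Fin n → ℝ) × (Fin n → ℝ) => T p.1 p.2)
          (hTcont (x, y) ⟨hx, hy⟩) hf (fun z hz => ⟨hz, hy⟩)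
      exact continuousWithinAt_const.mul
        (h1.rpow_const (Or.inl (lt_of_lt_of_le hTminpos (hT x hx y hy).1).ne'))
  -- the inner integral
  set Ih : (Fin n → ℝ) → ℝ := fun y => ∫ z in Ω, |lam z| * T y z ^ (1-σ) with hIhdef
  have hlamabs : IntegrableOn (fun z => |lam z|) Ω := hlam.abs
  have hIcont : ContinuousOn Ih Ω := hcontInt _ hlamabs
  have hIub : ∀ y ∈ Ω, Ih y ≤ Λ₂ := by
    intro y hy
    have h0 : Ih y ≤ ∫ z in Ω, |lam z| := by
      apply setIntegral_mono_on (hint _ hlamabs y hy) hlamabs hΩm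
      intro z hz
      nlinarith [abs_nonneg (lam z), (hTrpow y hy z hz).1, (hTrpow y hy z hz).2.2]
    linarith
  have hIlb : ∀ y ∈ Ω, Λ₁ * Tmax ^ (1-σ) ≤ Ih y := by
    intro y hy
    have h0 : (∫ z in Ω, |lam z|) * Tmax ^ (1-σ) ≤ Ih y := by
      rw [← integral_mul_const]
      apply setIntegral_mono_on (hlamabs.mul_const _) (hint _ hlamabs y hy) hΩm
      intro z hz
      nlinarith [abs_nonneg (lam z), (hTrpow y hy z hz).2.1]
    nlinarith [Real.rpow_nonneg hTmaxpos.le (1-σ)]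
  have hIpos : ∀ y ∈ Ω, 0 < Ih y := fun y hy =>
    lt_of_lt_of_le (mul_pos hΛ₁ (Real.rpow_pos_of_pos hTmaxpos _)) (hIlb y hy)
  -- price index identity
  have hGhat : ∀ y ∈ Ω, priceIndex Ω F σ T lam y ^ (σ-1) = F / Ih y := by
    intro y hy
    have hbase : 0 ≤ 1/F * Ih y := mul_nonneg (by positivity) (hIpos y hy).le
    have hne : (1:ℝ) - σ ≠ 0 := by linarith
    show ((1/F * Ih y) ^ (1/(1-σ))) ^ (σ-1) = F / Ih y
    have he : 1/(1-σ) * (σ-1) = -1 := by field_simp; ring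
    rw [← Real.rpow_mul hbase, he, Real.rpow_neg_one, mul_inv, one_div, inv_inv,
      ← div_eq_mul_inv]
  set C : ℝ := F * Tmax ^ (σ-1) / Λ₁ with hCdef
  have hC0 : 0 ≤ C := by
    apply div_nonneg _ hΛ₁.le
    exact mul_nonneg hF.le (Real.rpow_nonneg hTmaxpos.le _)
  have hGub : ∀ y ∈ Ω, priceIndex Ω F σ T lam y ^ (σ-1) ≤ C := by
    intro y hy
    rw [hGhat y hy]
    have h0 : F / Ih y ≤ F / (Λ₁ * Tmax ^ (1-σ)) :=
      div_le_div_of_nonneg_left hF.le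
        (mul_pos hΛ₁ (Real.rpow_pos_of_pos hTmaxpos _)) (hIlb y hy)
    have he : F / (Λ₁ * Tmax ^ (1-σ)) = C := by
      rw [hCdef, show (1:ℝ)-σ = -(σ-1) by ring, Real.rpow_neg hTmaxpos.le]
      have := (Real.rpow_pos_of_pos hTmaxpos (σ-1)).ne'
      field_simp
    linarith
  have hG0 : ∀ y ∈ Ω, 0 ≤ priceIndex Ω F σ T lam y ^ (σ-1) := by
    intro y hy
    rw [hGhat y hy]
    exact div_nonneg hF.le (hIpos y hy).le
  -- integrability of the weight function
  have hgWint : ∀ W : (Fin n → ℝ) → ℝ, ContinuousOn W Ω →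
      IntegrableOn (fun y => (W y * |lam y| + φ y) * priceIndex Ω F σ T lam y ^ (σ-1)) Ω := by
    intro W hW
    obtain ⟨M, hM⟩ := hΩc.exists_bound_of_continuousOn hW
    refine Integrable.mono' (g := fun y => (M * |lam y| + |φ y|) * C)
      (((hlamabs.const_mul M).add hφint.abs).mul_const C) ?_ ?_
    · refine AEStronglyMeasurable.congr (f := fun y =>
        (W y * |lam y| + φ y) * (F / Ih y)) ?_ ?_
      · exact (((hW.aestronglyMeasurable hΩm).mul hlamabs.aestronglyMeasurable).add
          hφint.aestronglyMeasurable).mul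
          ((continuousOn_const.div hIcont (fun y hy => (hIpos y hy).ne')).aestronglyMeasurable hΩm)
      · filter_upwards [ae_restrict_mem hΩm] with y hy
        rw [hGhat y hy]
    · filter_upwards [ae_restrict_mem hΩm] with y hy
      have hA : |W y * |lam y| + φ y| ≤ M * |lam y| + |φ y| := by
        refine le_trans (abs_add_le _ _) ?_
        rw [abs_mul, abs_abs]
        have := hM y hy
        rw [Real.norm_eq_abs] at this
        nlinarith [abs_nonneg (lam y)]
      have hB : |priceIndex Ω F σ T lam y ^ (σ-1)| ≤ C := by
        rw [abs_of_nonneg (hG0 y hy)]; exact hGub y hy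
      rw [Real.norm_eq_abs, abs_mul]
      exact mul_le_mul hA hB (abs_nonneg _) (le_trans (abs_nonneg _) hA)
  -- Part 1
  have part1 : ∀ W : (Fin n → ℝ) → ℝ, ContinuousOn W Ω → (∀ x ∈ Ω, 0 ≤ W x) →
      ContinuousOn (wageOp Ω F σ μ T φ lam W) Ω ∧
        ∀ x ∈ Ω, 0 ≤ wageOp Ω F σ μ T φ lam W x := by
    intro W hW hW0
    constructor
    · have h0 := hcontInt _ (hgWint W hW)
      have heq : wageOp Ω F σ μ T φ lam W = fun x => (μ/(σ*F)) *
          ∫ y in Ω, ((W y * |lam y| + φ y) * priceIndex Ω F σ T lam y ^ (σ-1)) * T x y ^ (1-σ) := by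
        funext x
        simp only [wageOp]
      rw [heq]
      exact continuousOn_const.mul h0
    · intro x hx
      apply mul_nonneg (by positivity)
      apply integral_nonneg_of_ae
      filter_upwards [ae_restrict_mem hΩm, hφ0] with y hy hφy
      have h1 : 0 ≤ W y * |lam y| + φ y :=
        add_nonneg (mul_nonneg (hW0 y hy) (abs_nonneg _)) hφy
      exact mul_nonneg (mul_nonneg h1 (hG0 y hy)) (hTrpow x hx y hy).2.2
  -- Part 2
  have part2 : ∀ W₁ W₂ : (Fin n → ℝ) → ℝ,
      ContinuousOn W₁ Ω → (∀ x ∈ Ω, 0 ≤ W₁ x) →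
      ContinuousOn W₂ Ω → (∀ x ∈ Ω, 0 ≤ W₂ x) →
      supNormOn Ω (fun x => wageOp Ω F σ μ T φ lam W₁ x - wageOp Ω F σ μ T φ lam W₂ x) ≤
        μ / σ * (Tmax / Tmin) ^ (σ - 1) * (Λ₂ / Λ₁) *
          supNormOn Ω (fun x => W₁ x - W₂ x) := by
    intro W₁ W₂ hW₁ hW₁0 hW₂ hW₂0
    set N := supNormOn Ω (fun x => W₁ x - W₂ x) with hNdef
    have hbdd : BddAbove ((fun x => |W₁ x - W₂ x|) '' Ω) :=
      hΩc.bddAbove_image ((hW₁.sub hW₂).abs)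
    have hNle : ∀ y ∈ Ω, |W₁ y - W₂ y| ≤ N := fun y hy => le_csSup hbdd ⟨y, hy, rfl⟩
    have hN0 : 0 ≤ N := le_trans (abs_nonneg _) (hNle x₀ hx₀)
    have hrhs0 : 0 ≤ μ / σ * (Tmax / Tmin) ^ (σ - 1) * (Λ₂ / Λ₁) :=
      mul_nonneg (mul_nonneg (div_nonneg hμ0.le hσ0.le)
        (Real.rpow_nonneg (div_nonneg hTmaxpos.le hTminpos.le) _))
        (div_nonneg hΛ₂.le hΛ₁.le)
    have hmain : ∀ x ∈ Ω, |wageOp Ω F σ μ T φ lam W₁ x - wageOp Ω F σ μ T φ lam W₂ x| ≤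
        μ / σ * (Tmax / Tmin) ^ (σ - 1) * (Λ₂ / Λ₁) * N := by
      intro x hx
      have hi1 := hint _ (hgWint W₁ hW₁) x hx
      have hi2 := hint _ (hgWint W₂ hW₂) x hx
      have heq : wageOp Ω F σ μ T φ lam W₁ x - wageOp Ω F σ μ T φ lam W₂ x
          = (μ/(σ*F)) * ∫ y in Ω,
            (((W₁ y * |lam y| + φ y) * priceIndex Ω F σ T lam y ^ (σ-1)) * T x y ^ (1-σ)
            - ((W₂ y * |lam y| + φ y) * priceIndex Ω F σ T lam y ^ (σ-1)) * T x y ^ (1-σ)) := by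
        rw [integral_sub hi1 hi2]
        simp only [wageOp]
        ring
      rw [heq, abs_mul, abs_of_nonneg (show (0:ℝ) ≤ μ/(σ*F) by positivity)]
      have hbound : |∫ y in Ω,
            (((W₁ y * |lam y| + φ y) * priceIndex Ω F σ T lam y ^ (σ-1)) * T x y ^ (1-σ)
            - ((W₂ y * |lam y| + φ y) * priceIndex Ω F σ T lam y ^ (σ-1)) * T x y ^ (1-σ))| ≤
          ∫ y in Ω, (N * C * Tmin ^ (1-σ)) * |lam y| := by
        rw [← Real.norm_eq_abs]
        refine norm_integral_le_of_norm_le (hlamabs.const_mul _) ?_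
        filter_upwards [ae_restrict_mem hΩm] with y hy
        have hring : ((W₁ y * |lam y| + φ y) * priceIndex Ω F σ T lam y ^ (σ-1)) * T x y ^ (1-σ)
            - ((W₂ y * |lam y| + φ y) * priceIndex Ω F σ T lam y ^ (σ-1)) * T x y ^ (1-σ)
            = ((W₁ y - W₂ y) * |lam y|) * (priceIndex Ω F σ T lam y ^ (σ-1) * T x y ^ (1-σ)) := by
          ring
        rw [Real.norm_eq_abs, hring, abs_mul, abs_mul, abs_abs,
          abs_of_nonneg (mul_nonneg (hG0 y hy) (hTrpow x hx y hy).2.2)]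
        have hTle : T x y ^ (1-σ) ≤ Tmin ^ (1-σ) :=
          Real.rpow_le_rpow_of_nonpos hTminpos (hT x hx y hy).1 hexp
        have hGT : priceIndex Ω F σ T lam y ^ (σ-1) * T x y ^ (1-σ) ≤ C * Tmin ^ (1-σ) :=
          mul_le_mul (hGub y hy) hTle (hTrpow x hx y hy).2.2 hC0
        have h1 : |W₁ y - W₂ y| * |lam y| ≤ N * |lam y| :=
          mul_le_mul_of_nonneg_right (hNle y hy) (abs_nonneg _)
        calc |W₁ y - W₂ y| * |lam y| * (priceIndex Ω F σ T lam y ^ (σ-1) * T x y ^ (1-σ))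
            ≤ (N * |lam y|) * (C * Tmin ^ (1-σ)) := by
              apply mul_le_mul h1 hGT
                (mul_nonneg (hG0 y hy) (hTrpow x hx y hy).2.2)
                (mul_nonneg hN0 (abs_nonneg _))
          _ = (N * C * Tmin ^ (1-σ)) * |lam y| := by ring
      have hval : ∫ y in Ω, (N * C * Tmin ^ (1-σ)) * |lam y|
          ≤ (N * C * Tmin ^ (1-σ)) * Λ₂ := by
        rw [integral_const_mul]
        exact mul_le_mul_of_nonneg_left h₂
          (mul_nonneg (mul_nonneg hN0 hC0) (Real.rpow_nonneg hTminpos.le _))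
      have halg : μ/(σ*F) * ((N * C * Tmin ^ (1-σ)) * Λ₂)
          = μ / σ * (Tmax / Tmin) ^ (σ - 1) * (Λ₂ / Λ₁) * N := by
        rw [hCdef, Real.div_rpow hTmaxpos.le hTminpos.le,
          show (1:ℝ)-σ = -(σ-1) by ring, Real.rpow_neg hTminpos.le]
        have h1 := (Real.rpow_pos_of_pos hTminpos (σ-1)).ne'
        have h2 := (Real.rpow_pos_of_pos hTmaxpos (σ-1)).ne'
        field_simp
      calc μ/(σ*F) * |∫ y in Ω,
            (((W₁ y * |lam y| + φ y) * priceIndex Ω F σ T lam y ^ (σ-1)) * T x y ^ (1-σ)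
            - ((W₂ y * |lam y| + φ y) * priceIndex Ω F σ T lam y ^ (σ-1)) * T x y ^ (1-σ))|
          ≤ μ/(σ*F) * ((N * C * Tmin ^ (1-σ)) * Λ₂) := by
            apply mul_le_mul_of_nonneg_left (le_trans hbound hval) (by positivity)
        _ = μ / σ * (Tmax / Tmin) ^ (σ - 1) * (Λ₂ / Λ₁) * N := halg
    apply Real.sSup_le
    · rintro v ⟨x, hx, rfl⟩
      exact hmain x hx
    · exact mul_nonneg hrhs0 hN0
  have hrhs0' : 0 ≤ μ / σ * (Tmax / Tmin) ^ (σ - 1) * (Λ₂ / Λ₁) :=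
    mul_nonneg (mul_nonneg (div_nonneg hμ0.le hσ0.le)
      (Real.rpow_nonneg (div_nonneg hTmaxpos.le hTminpos.le) _))
      (div_nonneg hΛ₂.le hΛ₁.le)
  exact ⟨part1, part2, fun hlt => ⟨μ / σ * (Tmax / Tmin) ^ (σ - 1) * (Λ₂ / Λ₁),
    hrhs0', hlt, fun W₁ W₂ a b c d => part2 W₁ W₂ a b c d⟩⟩
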